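/- Let Γ > 0 and let e^{At} = e^{-2t/Γ}[[1+2Γ⁻¹t, 4Γ⁻²t],[-t, 1-2Γ⁻¹t]] with B = [[0,0],[0,√(2Γ)]]. Then the (1,1) entry of Σ_t = ∫₀ᵗ e^{A(t-s)} B Bᵀ (e^{A(t-s)})ᵀ ds equals (e^{4t/Γ} - 1 - 4tΓ⁻¹ - 8t²Γ⁻²) e^{-4t/Γ}. -/

import Mathlib

open scoped Matrix

/-- With `e^{At} = e^{-2t/Γ}[[1+2Γ⁻¹t, 4Γ⁻²t],[-t, 1-2Γ⁻¹t]]` and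
`B = [[0,0],[0,√(2Γ)]]`, the `(1,1)` entry of
`Σ_t = ∫₀ᵗ e^{A(t-s)} B Bᵀ (e^{A(t-s)})ᵀ ds` equals
`(e^{4t/Γ} - 1 - 4tΓ⁻¹ - 8t²Γ⁻²) e^{-4t/Γ}`. -/
theorem lyapunov_integral_first_entry
    (Γ : ℝ) (hΓ : 0 < Γ)
    (E : ℝ → Matrix (Fin 2) (Fin 2) ℝ)
    (hE : ∀ t : ℝ, E t = Real.exp (-2 * t / Γ) •
      !![1 + 2 / Γ * t, 4 / Γ ^ 2 * t; -t, 1 - 2 / Γ * t])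
    (B : Matrix (Fin 2) (Fin 2) ℝ)
    (hB : B = !![0, 0; 0, Real.sqrt (2 * Γ)])
    (Sig : ℝ → Matrix (Fin 2) (Fin 2) ℝ)
    (hSig : ∀ (t : ℝ) (i j : Fin 2),
      Sig t i j = ∫ s in (0 : ℝ)..t, (E (t - s) * B * Bᵀ * (E (t - s))ᵀ) i j)
    (t : ℝ) (ht : 0 ≤ t) :
    Sig t 0 0 =
      (Real.exp (4 * t / Γ) - 1 - 4 * t / Γ - 8 * t ^ 2 / Γ ^ 2) *
        Real.exp (-(4 * t) / Γ) := by
  have hΓ' : Γ ≠ 0 := hΓ.ne'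
  -- Step 1: the integrand's (0,0) entry is an explicit scalar function.
  have key : ∀ s : ℝ, (E (t - s) * B * Bᵀ * (E (t - s))ᵀ) 0 0
      = 32 / Γ ^ 3 * (t - s) ^ 2 * Real.exp (-4 * (t - s) / Γ) := by
    intro s
    have hBB : B * Bᵀ = !![0, 0; 0, 2 * Γ] := by
      have h2 : Real.sqrt 2 * Real.sqrt Γ * (Real.sqrt 2 * Real.sqrt Γ) = 2 * Γ := by
        rw [← Real.sqrt_mul (by norm_num), Real.mul_self_sqrt (by positivity)]
      subst hB
      ext i j
      fin_cases i <;> fin_cases j <;>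
        simp [Matrix.mul_apply, Fin.sum_univ_two, Matrix.transpose_apply,
          Matrix.vecHead, Matrix.vecTail, h2]
    have hexp : Real.exp (-2 * (t - s) / Γ) * Real.exp (-2 * (t - s) / Γ)
        = Real.exp (-4 * (t - s) / Γ) := by
      rw [← Real.exp_add]; ring_nf
    rw [mul_assoc, mul_assoc, ← mul_assoc B, hBB, ← hexp]
    simp [hE, Matrix.mul_apply, Fin.sum_univ_two, Matrix.transpose_apply,
      Matrix.vecHead, Matrix.vecTail, Matrix.vecMul, dotProduct]
    field_simp
    ring
  rw [hSig, intervalIntegral.integral_congr (fun s _ => key s)]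
  -- Step 2: evaluate the integral by the fundamental theorem of calculus.
  set F : ℝ → ℝ := fun s => Real.exp (-4 * (t - s) / Γ) *
    (8 * (t - s) ^ 2 / Γ ^ 2 + 4 * (t - s) / Γ + 1) with hF
  have hderiv : ∀ s : ℝ, HasDerivAt F
      (32 / Γ ^ 3 * (t - s) ^ 2 * Real.exp (-4 * (t - s) / Γ)) s := by
    intro s
    have hts : HasDerivAt (fun s : ℝ => t - s) (-1) s := (hasDerivAt_id s).const_sub t
    have h1 : HasDerivAt (fun s : ℝ => -4 * (t - s) / Γ) (4 / Γ) s := by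
      have := (hts.const_mul (-4)).div_const Γ
      exact this.congr_deriv (by ring)
    have h2 := h1.exp
    have h3 : HasDerivAt (fun s : ℝ => 8 * (t - s) ^ 2 / Γ ^ 2 + 4 * (t - s) / Γ + 1)
        (-16 * (t - s) / Γ ^ 2 + -4 / Γ) s := by
      have hp := ((hts.pow 2).const_mul 8).div_const (Γ ^ 2)
      have hq := (hts.const_mul 4).div_const Γ
      exact ((hp.add hq).add_const 1).congr_deriv (by ring)
    have := h2.mul h3
    refine this.congr_deriv ?_
    field_simp
    ring
  have hcont : Continuous fun s : ℝ =>
      32 / Γ ^ 3 * (t - s) ^ 2 * Real.exp (-4 * (t - s) / Γ) := by fun_prop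
  rw [intervalIntegral.integral_eq_sub_of_hasDerivAt (fun s _ => hderiv s)
    (hcont.intervalIntegrable 0 t)]
  have h0 : F t = 1 := by simp [hF]
  have hmul : Real.exp (4 * t / Γ) * Real.exp (-(4 * t) / Γ) = 1 := by
    rw [← Real.exp_add]; ring_nf; exact Real.exp_zero
  have h4 : Real.exp (-4 * (t - 0) / Γ) = Real.exp (-(4 * t) / Γ) := by
    congr 1; ring
  rw [h0, hF]
  simp only [sub_zero] at h4 ⊢
  rw [h4]
  linear_combination -hmul
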